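/- Consider N subsystems, where subsystem i has dynamics ẋ_i = f_i(x_i,u_i), y_i = h_i(x_i,u_i), interconnected through u = M¹¹y + M¹²d, e = M²¹y + M²²d. For each i let (Â_i,B̂_i,Ĉ_i,D̂_i) be matrices (the realization of a filter Ψ_i driven by [u_i;y_i] with state η_i) and X_i a real symmetric matrix, and suppose there is a differentiable V_i(x_i,η_i) ≥ 0 with V_i(0,0)=0 such that for all x_i, η_i, u_i, with y_i = h_i(x_i,u_i), ∇_{x_i}V_iᵀ f_i(x_i,u_i) + ∇_{η_i}V_iᵀ(Â_iη_i + B̂_i[u_i;y_i]) ≤ (Ĉ_iη_i + D̂_i[u_i;y_i])ᵀ X_i (Ĉ_iη_i + D̂_i[u_i;y_i]). Let (Â_W,B̂_W,Ĉ_W,D̂_W) be matrices (the realization of a global filter Ψ_W driven by [d;e] with state η_W), W a real symmetric matrix, and define Â = diag(Â_1,…,Â_N,Â_W), Ĉ = diag(Ĉ_1,…,Ĉ_N,Ĉ_W), and B̂, D̂ as diag(B̂_1,…,B̂_N,B̂_W) and diag(D̂_1,…,D̂_N,D̂_W) composed with the map (y,d) ↦ (u_1,y_1,…,u_N,y_N,d,e)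 induced by the interconnection. Suppose there exists a symmetric positive semidefinite P with [ÂᵀP + PÂ, PB̂; B̂ᵀP, 0] + [Ĉ D̂]ᵀ Q [Ĉ D̂] ⪯ 0, where Q = diag(X_1,…,X_N,−W). Then for all x_1,…,x_N, η_1,…,η_N, η_W, u_1,…,u_N and d satisfying y_i = h_i(x_i,u_i) and u = M¹¹y + M¹²d, with e = M²¹y + M²²d and η = (η_1,…,η_N,η_W), one has 2ηᵀP(Âη + B̂[y;d]) + ∑_{i=1}^N ( ∇_{x_i}V_iᵀ f_i(x_i,u_i) + ∇_{η_i}V_iᵀ(Â_iη_i + B̂_i[u_i;y_i]) ) ≤ (Ĉ_Wη_W + D̂_W[d;e])ᵀ W (Ĉ_Wη_W + D̂_W[d;e]); that is, the nonnegative function ηᵀPη + ∑_i V_i(x_i,η_i) certifies that the interconnected system satisfies the global integral quadratic constraint defined by Ψ_W and W. -/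

import Mathlib

open Matrix

/-- The matrix `T` realizing the map `(y,d) ↦ (u₁,y₁,…,u_N,y_N,d,e)` induced by the
interconnection `u = M¹¹y + M¹²d`, `e = M²¹y + M²²d`. -/
def interMap {N : ℕ} {m p : Fin N → ℕ} {pd me : ℕ}
    (M11 : ∀ i j, Matrix (Fin (m i)) (Fin (p j)) ℝ)
    (M12 : ∀ i, Matrix (Fin (m i)) (Fin pd) ℝ)
    (M21 : ∀ j, Matrix (Fin me) (Fin (p j)) ℝ)
    (M22 : Matrix (Fin me) (Fin pd) ℝ) :
    Matrix ((Σ i, Fin (m i + p i)) ⊕ Fin (pd + me)) ((Σ j, Fin (p j)) ⊕ Fin pd) ℝ :=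
  Matrix.of fun a s =>
    match a with
    | Sum.inl ⟨i, k⟩ =>
        Fin.addCases
          (fun k1 : Fin (m i) =>
            Sum.elim (fun jl : Σ j, Fin (p j) => M11 i jl.1 k1 jl.2)
              (fun l : Fin pd => M12 i k1 l) s)
          (fun k2 : Fin (p i) =>
            if s = Sum.inl ⟨i, k2⟩ then (1 : ℝ) else 0) k
    | Sum.inr j =>
        Fin.addCases
          (fun j1 : Fin pd => if s = Sum.inr j1 then (1 : ℝ) else 0)
          (fun j2 : Fin me =>
            Sum.elim (fun jl : Σ j', Fin (p j') => M21 jl.1 j2 jl.2)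
              (fun l : Fin pd => M22 j2 l) s) j



section helpers
variable {N : ℕ}

lemma blockDiagonal'_mulVec_apply {q n : Fin N → ℕ}
    (B : ∀ i, Matrix (Fin (q i)) (Fin (n i)) ℝ) (v : (Σ i, Fin (n i)) → ℝ)
    (a : Σ i, Fin (q i)) :
    (blockDiagonal' B *ᵥ v) a = (B a.1 *ᵥ fun k => v ⟨a.1, k⟩) a.2 := by
  obtain ⟨i, k⟩ := a
  simp only [mulVec, dotProduct, ← Finset.univ_sigma_univ, Finset.sum_sigma]
  rw [Finset.sum_eq_single i]
  · simp [blockDiagonal'_apply_eq]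
  · intro j _ hj
    simp [blockDiagonal'_apply_ne _ _ _ (Ne.symm hj)]
  · simp

lemma dot_blockDiagonal'_mulVec {n : Fin N → ℕ}
    (X : ∀ i, Matrix (Fin (n i)) (Fin (n i)) ℝ) (a : (Σ i, Fin (n i)) → ℝ) :
    a ⬝ᵥ (blockDiagonal' X *ᵥ a) =
      ∑ i, (fun k => a ⟨i, k⟩) ⬝ᵥ (X i *ᵥ fun k => a ⟨i, k⟩) := by
  simp only [dotProduct, ← Finset.univ_sigma_univ, Finset.sum_sigma]
  refine Finset.sum_congr rfl fun i _ => Finset.sum_congr rfl fun k _ => ?_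
  rw [blockDiagonal'_mulVec_apply]

lemma key_sym {n q : Type*} [Fintype n] [Fintype q]
    (P : Matrix n n ℝ) (hPs : Pᵀ = P) (B : Matrix n q ℝ) (a : n → ℝ) (b : q → ℝ) :
    b ⬝ᵥ ((Bᵀ * P) *ᵥ a) = a ⬝ᵥ (P *ᵥ (B *ᵥ b)) :=
  calc b ⬝ᵥ ((Bᵀ * P) *ᵥ a)
      = (B *ᵥ b) ⬝ᵥ (P *ᵥ a) := by
        rw [← mulVec_mulVec, dotProduct_mulVec, vecMul_transpose]
    _ = (Pᵀ *ᵥ a) ⬝ᵥ (B *ᵥ b) := by rw [hPs, dotProduct_comm]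
    _ = (a ᵥ* P) ⬝ᵥ (B *ᵥ b) := by rw [mulVec_transpose]
    _ = a ⬝ᵥ (P *ᵥ (B *ᵥ b)) := (dotProduct_mulVec _ _ _).symm

lemma quad_sym {n q : Type*} [Fintype n] [Fintype q]
    (P : Matrix n n ℝ) (hPs : Pᵀ = P) (A : Matrix n n ℝ) (B : Matrix n q ℝ)
    (a : n → ℝ) (b : q → ℝ) :
    a ⬝ᵥ ((Aᵀ * P + P * A) *ᵥ a + (P * B) *ᵥ b) + b ⬝ᵥ ((Bᵀ * P) *ᵥ a) =
      2 * (a ⬝ᵥ (P *ᵥ (A *ᵥ a + B *ᵥ b))) := by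
  have h1 := key_sym P hPs A a a
  have h2 := key_sym P hPs B a b
  simp only [add_mulVec, dotProduct_add, mulVec_add, ← mulVec_mulVec] at *
  rw [h1, h2]; ring

lemma quad_conj {n q : Type*} [Fintype n] [Fintype q]
    (M : Matrix q n ℝ) (Q : Matrix q q ℝ) (v : n → ℝ) :
    v ⬝ᵥ ((Mᵀ * Q * M) *ᵥ v) = (M *ᵥ v) ⬝ᵥ (Q *ᵥ (M *ᵥ v)) := by
  rw [← mulVec_mulVec, ← mulVec_mulVec, dotProduct_mulVec, vecMul_transpose]

lemma interMap_mulVec {N : ℕ} {m p : Fin N → ℕ} {pd me : ℕ}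
    (M11 : ∀ i j, Matrix (Fin (m i)) (Fin (p j)) ℝ)
    (M12 : ∀ i, Matrix (Fin (m i)) (Fin pd) ℝ)
    (M21 : ∀ j, Matrix (Fin me) (Fin (p j)) ℝ)
    (M22 : Matrix (Fin me) (Fin pd) ℝ)
    (y : ∀ j, Fin (p j) → ℝ) (d : Fin pd → ℝ) :
    interMap M11 M12 M21 M22 *ᵥ Sum.elim (fun a : Σ j, Fin (p j) => y a.1 a.2) d =
      Sum.elim
        (fun a : Σ i, Fin (m i + p i) =>
          Fin.append ((∑ j, (M11 a.1 j) *ᵥ (y j)) + (M12 a.1) *ᵥ d) (y a.1) a.2)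
        (Fin.append d ((∑ j, (M21 j) *ᵥ (y j)) + M22 *ᵥ d)) := by
  funext s
  cases s with
  | inl a =>
    obtain ⟨i, k⟩ := a
    induction k using Fin.addCases with
    | left k1 =>
      simp only [mulVec, dotProduct, interMap, Matrix.of_apply, Sum.elim_inl,
        Fin.addCases_left, Fin.append_left]
      rw [Fintype.sum_sum_type]
      simp only [Sum.elim_inl, Sum.elim_inr, ← Finset.univ_sigma_univ, Finset.sum_sigma,
        Pi.add_apply, Finset.sum_apply, mulVec, dotProduct]
    | right k2 =>
      simp only [mulVec, dotProduct, interMap, Matrix.of_apply, Sum.elim_inl,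
        Fin.addCases_right, Fin.append_right, ite_mul, one_mul, zero_mul]
      rw [Finset.sum_ite_eq' Finset.univ (Sum.inl ⟨i, k2⟩ : (Σ j, Fin (p j)) ⊕ Fin pd)]
      simp
  | inr j =>
    induction j using Fin.addCases with
    | left j1 =>
      simp only [mulVec, dotProduct, interMap, Matrix.of_apply, Sum.elim_inr,
        Fin.addCases_left, Fin.append_left, ite_mul, one_mul, zero_mul]
      rw [Finset.sum_ite_eq' Finset.univ (Sum.inr j1 : (Σ j, Fin (p j)) ⊕ Fin pd)]
      simp
    | right j2 =>
      simp only [mulVec, dotProduct, interMap, Matrix.of_apply, Sum.elim_inr,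
        Fin.addCases_right, Fin.append_right]
      rw [Fintype.sum_sum_type]
      simp only [Sum.elim_inl, Sum.elim_inr, ← Finset.univ_sigma_univ, Finset.sum_sigma,
        Pi.add_apply, Finset.sum_apply, mulVec, dotProduct]

end helpers

/-- **Proposition 2 (compositional IQC certification).** `N` subsystems
`ẋᵢ = fᵢ(xᵢ,uᵢ)`, `yᵢ = hᵢ(xᵢ,uᵢ)` are interconnected by `u = M¹¹y + M¹²d`,
`e = M²¹y + M²²d`. Each subsystem satisfies the IQC defined by the filter
`(Âᵢ,B̂ᵢ,Ĉᵢ,D̂ᵢ)` (driven by `[uᵢ;yᵢ]`, state `ηᵢ`) and symmetric `Xᵢ`, certified by a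
nonnegative differentiable `Vᵢ(xᵢ,ηᵢ)` with `Vᵢ(0,0) = 0`. Let `(Â_W,B̂_W,Ĉ_W,D̂_W)` be
a global filter driven by `[d;e]`, `W` symmetric, and form
`Â = diag(Â₁,…,Â_N,Â_W)`, `Ĉ = diag(Ĉ₁,…,Ĉ_N,Ĉ_W)`, and
`B̂ = diag(B̂₁,…,B̂_N,B̂_W)∘T`, `D̂ = diag(D̂₁,…,D̂_N,D̂_W)∘T` where `T` is the map
`(y,d) ↦ (u₁,y₁,…,u_N,y_N,d,e)`. If a PSD `P` satisfies the LMI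
`[ÂᵀP + PÂ, PB̂; B̂ᵀP, 0] + [Ĉ D̂]ᵀ Q [Ĉ D̂] ⪯ 0` with `Q = diag(X₁,…,X_N,−W)`,
then along the interconnection
`2ηᵀP(Âη + B̂[y;d]) + ∑ᵢ d/dt Vᵢ ≤ (Ĉ_Wη_W + D̂_W[d;e])ᵀ W (Ĉ_Wη_W + D̂_W[d;e])`:
the nonnegative function `ηᵀPη + ∑ᵢVᵢ` certifies the global IQC defined by `Ψ_W`, `W`. -/
theorem stmt_5 {N : ℕ} {nx m p nη nz : Fin N → ℕ} {pd me nηW nzW : ℕ}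
    (f : ∀ i, (Fin (nx i) → ℝ) → (Fin (m i) → ℝ) → (Fin (nx i) → ℝ))
    (h : ∀ i, (Fin (nx i) → ℝ) → (Fin (m i) → ℝ) → (Fin (p i) → ℝ))
    (M11 : ∀ i j, Matrix (Fin (m i)) (Fin (p j)) ℝ)
    (M12 : ∀ i, Matrix (Fin (m i)) (Fin pd) ℝ)
    (M21 : ∀ j, Matrix (Fin me) (Fin (p j)) ℝ)
    (M22 : Matrix (Fin me) (Fin pd) ℝ)
    (Ai : ∀ i, Matrix (Fin (nη i)) (Fin (nη i)) ℝ)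
    (Bi : ∀ i, Matrix (Fin (nη i)) (Fin (m i + p i)) ℝ)
    (Ci : ∀ i, Matrix (Fin (nz i)) (Fin (nη i)) ℝ)
    (Di : ∀ i, Matrix (Fin (nz i)) (Fin (m i + p i)) ℝ)
    (X : ∀ i, Matrix (Fin (nz i)) (Fin (nz i)) ℝ)
    (hXsymm : ∀ i, (X i).IsSymm)
    (V : ∀ i, (Fin (nx i) → ℝ) × (Fin (nη i) → ℝ) → ℝ)
    (hVdiff : ∀ i, Differentiable ℝ (V i))
    (hVnonneg : ∀ i xη, 0 ≤ V i xη)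
    (hV0 : ∀ i, V i (0, 0) = 0)
    (hlocal : ∀ i (x : Fin (nx i) → ℝ) (η : Fin (nη i) → ℝ) (u : Fin (m i) → ℝ),
      fderiv ℝ (V i) (x, η)
        (f i x u, (Ai i) *ᵥ η + (Bi i) *ᵥ (Fin.append u (h i x u))) ≤
      ((Ci i) *ᵥ η + (Di i) *ᵥ (Fin.append u (h i x u))) ⬝ᵥ
        ((X i) *ᵥ ((Ci i) *ᵥ η + (Di i) *ᵥ (Fin.append u (h i x u)))))
    (AW : Matrix (Fin nηW) (Fin nηW) ℝ)
    (BW : Matrix (Fin nηW) (Fin (pd + me)) ℝ)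
    (CW : Matrix (Fin nzW) (Fin nηW) ℝ)
    (DW : Matrix (Fin nzW) (Fin (pd + me)) ℝ)
    (W : Matrix (Fin nzW) (Fin nzW) ℝ) (hWsymm : W.IsSymm)
    (P : Matrix ((Σ i, Fin (nη i)) ⊕ Fin nηW) ((Σ i, Fin (nη i)) ⊕ Fin nηW) ℝ)
    (hP : P.PosSemidef)
    (hLMI : ∀ v : (((Σ i, Fin (nη i)) ⊕ Fin nηW) ⊕ ((Σ j, Fin (p j)) ⊕ Fin pd)) → ℝ,
      v ⬝ᵥ
        ((fromBlocks
            ((fromBlocks (blockDiagonal' Ai) 0 0 AW)ᵀ * P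
              + P * fromBlocks (blockDiagonal' Ai) 0 0 AW)
            (P * (fromBlocks (blockDiagonal' Bi) 0 0 BW * interMap M11 M12 M21 M22))
            ((fromBlocks (blockDiagonal' Bi) 0 0 BW * interMap M11 M12 M21 M22)ᵀ * P)
            0
          + (fromCols (fromBlocks (blockDiagonal' Ci) 0 0 CW)
                (fromBlocks (blockDiagonal' Di) 0 0 DW * interMap M11 M12 M21 M22))ᵀ
            * fromBlocks (blockDiagonal' X) 0 0 (-W)
            * fromCols (fromBlocks (blockDiagonal' Ci) 0 0 CW)
                (fromBlocks (blockDiagonal' Di) 0 0 DW * interMap M11 M12 M21 M22))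
          *ᵥ v) ≤ 0) :
    ∀ (x : ∀ i, Fin (nx i) → ℝ) (η : ∀ i, Fin (nη i) → ℝ) (ηW : Fin nηW → ℝ)
      (u : ∀ i, Fin (m i) → ℝ) (d : Fin pd → ℝ),
      (∀ i, u i = (∑ j, (M11 i j) *ᵥ (h j (x j) (u j))) + (M12 i) *ᵥ d) →
      2 * ((Sum.elim (fun a : Σ i, Fin (nη i) => η a.1 a.2) ηW) ⬝ᵥ
            (P *ᵥ
              ((fromBlocks (blockDiagonal' Ai) 0 0 AW) *ᵥ
                  (Sum.elim (fun a : Σ i, Fin (nη i) => η a.1 a.2) ηW)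
                + (fromBlocks (blockDiagonal' Bi) 0 0 BW * interMap M11 M12 M21 M22) *ᵥ
                  (Sum.elim (fun a : Σ j, Fin (p j) => h a.1 (x a.1) (u a.1) a.2) d))))
        + ∑ i, fderiv ℝ (V i) (x i, η i)
            (f i (x i) (u i),
              (Ai i) *ᵥ (η i) + (Bi i) *ᵥ (Fin.append (u i) (h i (x i) (u i)))) ≤
      (CW *ᵥ ηW + DW *ᵥ (Fin.append d ((∑ j, (M21 j) *ᵥ (h j (x j) (u j))) + M22 *ᵥ d))) ⬝ᵥ
        (W *ᵥ (CW *ᵥ ηW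
          + DW *ᵥ (Fin.append d ((∑ j, (M21 j) *ᵥ (h j (x j) (u j))) + M22 *ᵥ d)))) := by
  intro x η ηW u d hu
  have hPT : Pᵀ = P := by
    have := hP.1
    rwa [Matrix.IsHermitian, conjTranspose_eq_transpose_of_trivial] at this
  set yv : ∀ j, Fin (p j) → ℝ := fun j => h j (x j) (u j) with hyv
  set ηb : ((Σ i, Fin (nη i)) ⊕ Fin nηW) → ℝ :=
    Sum.elim (fun a : Σ i, Fin (nη i) => η a.1 a.2) ηW with hηb
  set w : ((Σ j, Fin (p j)) ⊕ Fin pd) → ℝ :=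
    Sum.elim (fun a : Σ j, Fin (p j) => h a.1 (x a.1) (u a.1) a.2) d with hw
  set A' := fromBlocks (blockDiagonal' Ai) 0 0 AW with hA'
  set B' := fromBlocks (blockDiagonal' Bi) 0 0 BW * interMap M11 M12 M21 M22 with hB'
  set Cc := fromBlocks (blockDiagonal' Ci) 0 0 CW with hCc
  set Dc := fromBlocks (blockDiagonal' Di) 0 0 DW * interMap M11 M12 M21 M22 with hDc
  set zr : Fin nzW → ℝ :=
    CW *ᵥ ηW + DW *ᵥ (Fin.append d ((∑ j, (M21 j) *ᵥ (h j (x j) (u j))) + M22 *ᵥ d))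
    with hzr
  set zl : (Σ i, Fin (nz i)) → ℝ := fun a =>
    ((Ci a.1) *ᵥ (η a.1)
      + (Di a.1) *ᵥ (Fin.append (u a.1) (h a.1 (x a.1) (u a.1)))) a.2 with hzl
  have hz : fromCols Cc Dc *ᵥ Sum.elim ηb w = Sum.elim zl zr := by
    rw [fromCols_mulVec_sumElim]
    have h1 : Cc *ᵥ ηb =
        Sum.elim (blockDiagonal' Ci *ᵥ fun a : Σ i, Fin (nη i) => η a.1 a.2)
          (CW *ᵥ ηW) := by
      rw [hCc, hηb, fromBlocks_mulVec]
      simp only [Sum.elim_comp_inl, Sum.elim_comp_inr]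
      rw [zero_mulVec, zero_mulVec, add_zero, zero_add]
    have h2 : Dc *ᵥ w =
        Sum.elim
          (blockDiagonal' Di *ᵥ fun a : Σ i, Fin (m i + p i) =>
            Fin.append ((∑ j, (M11 a.1 j) *ᵥ (yv j)) + (M12 a.1) *ᵥ d) (yv a.1) a.2)
          (DW *ᵥ Fin.append d ((∑ j, (M21 j) *ᵥ (yv j)) + M22 *ᵥ d)) := by
      rw [hDc, hw, ← mulVec_mulVec, interMap_mulVec M11 M12 M21 M22 yv d,
        fromBlocks_mulVec]
      simp only [Sum.elim_comp_inl, Sum.elim_comp_inr]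
      rw [zero_mulVec, zero_mulVec, add_zero, zero_add]
    rw [h1, h2]
    funext s
    cases s with
    | inl a =>
      simp only [Pi.add_apply, Sum.elim_inl, hzl]
      rw [blockDiagonal'_mulVec_apply, blockDiagonal'_mulVec_apply]
      have hua : (∑ j, (M11 a.1 j) *ᵥ (yv j)) + (M12 a.1) *ᵥ d = u a.1 := (hu a.1).symm
      simp only [Pi.add_apply]
      congr 1
      congr 1
      simp only [hua, hyv]
      exact (congrArg (fun v => Fin.append v (h a.1 (x a.1) (u a.1))) (hu a.1)).symm
    | inr b =>
      simp only [Pi.add_apply, Sum.elim_inr, hzr, Pi.add_apply]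
      rfl
  have hLMI' := hLMI (Sum.elim ηb w)
  rw [add_mulVec, dotProduct_add, fromBlocks_mulVec, sumElim_dotProduct_sumElim] at hLMI'
  simp only [Sum.elim_comp_inl, Sum.elim_comp_inr] at hLMI'
  rw [zero_mulVec, add_zero, quad_sym P hPT A' B' ηb w, quad_conj, hz,
    fromBlocks_mulVec (blockDiagonal' X) 0 0 (-W) (Sum.elim zl zr)] at hLMI'
  simp only [Sum.elim_comp_inl, Sum.elim_comp_inr] at hLMI'
  rw [zero_mulVec, zero_mulVec, add_zero, zero_add, sumElim_dotProduct_sumElim,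
    dot_blockDiagonal'_mulVec, neg_mulVec, dotProduct_neg] at hLMI'
  have hsum : ∑ i, fderiv ℝ (V i) (x i, η i)
      (f i (x i) (u i),
        (Ai i) *ᵥ (η i) + (Bi i) *ᵥ (Fin.append (u i) (h i (x i) (u i)))) ≤
      ∑ i, (fun k => zl ⟨i, k⟩) ⬝ᵥ ((X i) *ᵥ fun k => zl ⟨i, k⟩) := by
    refine Finset.sum_le_sum fun i _ => ?_
    exact hlocal i (x i) (η i) (u i)
  linarith
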